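/- One-step recursion for the soft robust termination gradient (intermediate claim in the proof of Theorem 3): In the setting of the termination function gradient theorem (parameterized family β : ℝ → O → S → ℝ, θ-independent πΩ, πo, K, c, w, value functions (QΩ θ, Qo θ, Qβ θ, VΩ θ) satisfying the rectangular Bellman system for each θ, differentiability of β and QΩ in θ at θ₀), for all s ∈ S and ω ∈ O: ∑_p w p * deriv (θ ↦ QΩ θ s ω p) θ₀ = (∑_a πo ω s a * γ * ∑_{s'} K̄ s a s' * (deriv (θ ↦ β θ ω s') θ₀) * (V̄Ω θ₀ s' − Q̄Ω θ₀ s' ω)) + ∑_{(s',ω')} Pγ θ₀ ((s,ω),(s',ω')) * (∑_{p'} w p' * deriv (θ ↦ QΩ θ s' ω' p') θ₀). -/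

import Mathlib

open scoped Classical

open Finset

variable {S O A P : Type*} [Fintype S] [Fintype O] [Fintype A] [Fintype P]

/-- The average transition kernel `K̄ s a s' = ∑ p, w p * K p s a s'`. -/
noncomputable def Kbar (w : P → ℝ) (K : P → S → A → S → ℝ) (s : S) (a : A) (s' : S) : ℝ :=
  ∑ p, w p * K p s a s'

/-- One-step discounted state–option kernel `Pγ`. -/
noncomputable def Pgam (w : P → ℝ) (K : P → S → A → S → ℝ) (γ : ℝ)
    (πo : O → S → A → ℝ) (β : O → S → ℝ) (πΩ : S → O → ℝ)
    (x y : S × O) : ℝ :=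
  ∑ a, πo x.2 x.1 a * γ * Kbar w K x.1 a y.1 *
    ((1 - β x.2 y.1) * (if y.2 = x.2 then 1 else 0) + β x.2 y.1 * πΩ y.1 y.2)

/-- k-step iterates `Pγ^k` of the one-step discounted state–option kernel. -/
noncomputable def PgamIter (w : P → ℝ) (K : P → S → A → S → ℝ) (γ : ℝ)
    (πo : O → S → A → ℝ) (β : O → S → ℝ) (πΩ : S → O → ℝ) :
    ℕ → S × O → S × O → ℝ
  | 0, x, y => if y = x then 1 else 0
  | (k + 1), x, y => ∑ z, Pgam w K γ πo β πΩ x z * PgamIter w K γ πo β πΩ k z y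

/-- One-step recursion for the soft robust termination gradient
(intermediate claim in the proof of Theorem 3). -/
theorem termination_gradient_one_step
    [Nonempty S] [Nonempty O] [Nonempty A] [Nonempty P]
    (γ : ℝ) (hγ0 : 0 ≤ γ) (hγ1 : γ < 1)
    (c : S → A → ℝ)
    (K : P → S → A → S → ℝ)
    (hK0 : ∀ p s a s', 0 ≤ K p s a s') (hK1 : ∀ p s a, ∑ s', K p s a s' = 1)
    (w : P → ℝ) (hw0 : ∀ p, 0 ≤ w p) (hw1 : ∑ p, w p = 1)
    (πΩ : S → O → ℝ)
    (hπΩ0 : ∀ s ω, 0 ≤ πΩ s ω) (hπΩ1 : ∀ s, ∑ ω, πΩ s ω = 1)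
    (πo : O → S → A → ℝ)
    (hπo0 : ∀ ω s a, 0 ≤ πo ω s a) (hπo1 : ∀ ω s, ∑ a, πo ω s a = 1)
    (β : ℝ → O → S → ℝ) (hβ0 : ∀ θ ω s, 0 ≤ β θ ω s) (hβ1 : ∀ θ ω s, β θ ω s ≤ 1)
    (QΩ : ℝ → S → O → P → ℝ) (Qo : ℝ → S → O → A → P → ℝ)
    (Qβ : ℝ → S → O → P → ℝ) (VΩ : ℝ → S → P → ℝ)
    (hQΩ : ∀ θ s ω p, QΩ θ s ω p = ∑ a, πo ω s a * Qo θ s ω a p)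
    (hQo : ∀ θ s ω a p,
      Qo θ s ω a p = c s a + γ * ∑ s', K p s a s' * (∑ p', w p' * Qβ θ s' ω p'))
    (hQβ : ∀ θ s ω p, Qβ θ s ω p = (1 - β θ ω s) * QΩ θ s ω p + β θ ω s * VΩ θ s p)
    (hVΩ : ∀ θ s p, VΩ θ s p = ∑ ω, πΩ s ω * QΩ θ s ω p)
    (θ₀ : ℝ)
    (hdβ : ∀ ω s, DifferentiableAt ℝ (fun θ => β θ ω s) θ₀)
    (hdQ : ∀ s ω p, DifferentiableAt ℝ (fun θ => QΩ θ s ω p) θ₀) :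
    ∀ (s : S) (ω : O),
      ∑ p, w p * deriv (fun θ => QΩ θ s ω p) θ₀ =
        (∑ a, πo ω s a * γ * ∑ s', Kbar w K s a s' *
            deriv (fun θ => β θ ω s') θ₀ *
            ((∑ p, w p * VΩ θ₀ s' p) - (∑ p, w p * QΩ θ₀ s' ω p))) +
        ∑ q : S × O, Pgam w K γ πo (β θ₀) πΩ (s, ω) q *
          (∑ p', w p' * deriv (fun θ => QΩ θ q.1 q.2 p') θ₀) := by

  intro s ω
  classical
  set βd : O → S → ℝ := fun ω s => deriv (fun θ => β θ ω s) θ₀ with hβdd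
  set Qd : S → O → P → ℝ := fun s ω p => deriv (fun θ => QΩ θ s ω p) θ₀ with hQdd
  -- the derivative of QΩ via the Bellman system
  have key : ∀ p, Qd s ω p =
      ∑ a, πo ω s a * (γ * ∑ s', K p s a s' * ∑ p', w p' *
        ((-(βd ω s') * QΩ θ₀ s' ω p' + (1 - β θ₀ ω s') * Qd s' ω p') +
          (βd ω s' * (∑ ω', πΩ s' ω' * QΩ θ₀ s' ω' p') +
            β θ₀ ω s' * ∑ ω', πΩ s' ω' * Qd s' ω' p'))) := by
    intro p
    have hfun : (fun θ => QΩ θ s ω p) = fun θ =>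
        ∑ a, πo ω s a * (c s a + γ * ∑ s', K p s a s' * ∑ p', w p' *
          ((1 - β θ ω s') * QΩ θ s' ω p' +
            β θ ω s' * ∑ ω', πΩ s' ω' * QΩ θ s' ω' p')) := by
      funext θ
      rw [hQΩ]
      simp only [hQo, hQβ, hVΩ]
    have hd : HasDerivAt (fun θ => QΩ θ s ω p)
        (∑ a, πo ω s a * (γ * ∑ s', K p s a s' * ∑ p', w p' *
          ((-(βd ω s') * QΩ θ₀ s' ω p' + (1 - β θ₀ ω s') * Qd s' ω p') +
            (βd ω s' * (∑ ω', πΩ s' ω' * QΩ θ₀ s' ω' p') +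
              β θ₀ ω s' * ∑ ω', πΩ s' ω' * Qd s' ω' p')))) θ₀ := by
      rw [hfun]
      apply HasDerivAt.fun_sum
      intro a _
      refine HasDerivAt.const_mul _ ?_
      refine HasDerivAt.const_add _ ?_
      refine HasDerivAt.const_mul _ ?_
      apply HasDerivAt.fun_sum
      intro s' _
      refine HasDerivAt.const_mul _ ?_
      apply HasDerivAt.fun_sum
      intro p' _
      refine HasDerivAt.const_mul _ ?_
      refine HasDerivAt.add ?_ ?_
      · have h1 : HasDerivAt (fun θ => 1 - β θ ω s') (-(βd ω s')) θ₀ := by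
          simpa using (hdβ ω s').hasDerivAt.const_sub 1
        exact h1.mul (hdQ s' ω p').hasDerivAt
      · refine (hdβ ω s').hasDerivAt.mul ?_
        apply HasDerivAt.fun_sum
        intro ω' _
        exact ((hdQ s' ω' p').hasDerivAt).const_mul _
    exact hd.deriv
  -- general pull-out lemma
  have e1 : ∀ (C : ℝ) (f : P → ℝ), (∑ p', w p' * (C * f p')) = C * ∑ p, w p * f p := by
    intro C f
    rw [Finset.mul_sum]
    exact Finset.sum_congr rfl fun p _ => by ring
  have hswap2 : ∀ (s' : S), (∑ p, w p * ∑ ω', πΩ s' ω' * Qd s' ω' p) =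
      ∑ ω', πΩ s' ω' * ∑ p, w p * Qd s' ω' p := by
    intro s'
    simp only [Finset.mul_sum]
    rw [Finset.sum_comm]
    exact Finset.sum_congr rfl fun ω' _ => Finset.sum_congr rfl fun p _ => by ring
  -- averaged inner term
  have hM : ∀ s' : S, (∑ p', w p' *
      ((-(βd ω s') * QΩ θ₀ s' ω p' + (1 - β θ₀ ω s') * Qd s' ω p') +
        (βd ω s' * (∑ ω', πΩ s' ω' * QΩ θ₀ s' ω' p') +
          β θ₀ ω s' * ∑ ω', πΩ s' ω' * Qd s' ω' p'))) =
      βd ω s' * ((∑ p, w p * VΩ θ₀ s' p) - (∑ p, w p * QΩ θ₀ s' ω p)) +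
        ((1 - β θ₀ ω s') * (∑ p, w p * Qd s' ω p) +
          β θ₀ ω s' * ∑ ω', πΩ s' ω' * ∑ p, w p * Qd s' ω' p) := by
    intro s'
    have hV : ∀ p', (∑ ω', πΩ s' ω' * QΩ θ₀ s' ω' p') = VΩ θ₀ s' p' := fun p' =>
      (hVΩ θ₀ s' p').symm
    simp only [hV, mul_add, Finset.sum_add_distrib, e1, hswap2]
    ring

  -- rewritten key
  have key' : ∀ p, Qd s ω p = ∑ a, πo ω s a * (γ * ∑ s', K p s a s' *
      (βd ω s' * ((∑ p, w p * VΩ θ₀ s' p) - (∑ p, w p * QΩ θ₀ s' ω p)) +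
        ((1 - β θ₀ ω s') * (∑ p, w p * Qd s' ω p) +
          β θ₀ ω s' * ∑ ω', πΩ s' ω' * ∑ p, w p * Qd s' ω' p))) := by
    intro p
    rw [key p]
    simp only [hM]
  set M : S → ℝ := fun s' =>
      βd ω s' * ((∑ p, w p * VΩ θ₀ s' p) - (∑ p, w p * QΩ θ₀ s' ω p)) +
        ((1 - β θ₀ ω s') * (∑ p, w p * Qd s' ω p) +
          β θ₀ ω s' * ∑ ω', πΩ s' ω' * ∑ p, w p * Qd s' ω' p) with hMM
  have lhs_eq : (∑ p, w p * Qd s ω p) =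
      ∑ a, ∑ s', πo ω s a * γ * Kbar w K s a s' * M s' := by
    calc (∑ p, w p * Qd s ω p)
        = ∑ p, ∑ a, ∑ s', w p * (πo ω s a * (γ * (K p s a s' * M s'))) := by
          refine Finset.sum_congr rfl fun p _ => ?_
          rw [key' p, Finset.mul_sum]
          refine Finset.sum_congr rfl fun a _ => ?_
          rw [Finset.mul_sum, Finset.mul_sum, Finset.mul_sum]
      _ = ∑ a, ∑ s', ∑ p, w p * (πo ω s a * (γ * (K p s a s' * M s'))) := by
          rw [Finset.sum_comm]
          exact Finset.sum_congr rfl fun a _ => Finset.sum_comm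
      _ = ∑ a, ∑ s', πo ω s a * γ * Kbar w K s a s' * M s' := by
          refine Finset.sum_congr rfl fun a _ => Finset.sum_congr rfl fun s' _ => ?_
          simp only [Kbar, Finset.sum_mul, Finset.mul_sum]
          exact Finset.sum_congr rfl fun p _ => by ring
  have t2 : (∑ q : S × O, Pgam w K γ πo (β θ₀) πΩ (s, ω) q *
        (∑ p', w p' * Qd q.1 q.2 p')) =
      ∑ a, ∑ s', πo ω s a * γ * Kbar w K s a s' *
        ((1 - β θ₀ ω s') * (∑ p, w p * Qd s' ω p) +
          β θ₀ ω s' * ∑ ω', πΩ s' ω' * ∑ p, w p * Qd s' ω' p) := by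
    rw [Fintype.sum_prod_type]
    calc (∑ s', ∑ ω', Pgam w K γ πo (β θ₀) πΩ (s, ω) (s', ω') *
            (∑ p', w p' * Qd s' ω' p'))
        = ∑ s', ∑ ω', ∑ a, (πo ω s a * γ * Kbar w K s a s' *
            ((1 - β θ₀ ω s') * (if ω' = ω then 1 else 0) + β θ₀ ω s' * πΩ s' ω')) *
            (∑ p', w p' * Qd s' ω' p') := by
          simp only [Pgam, Finset.sum_mul]
      _ = ∑ a, ∑ s', ∑ ω', (πo ω s a * γ * Kbar w K s a s' *
            ((1 - β θ₀ ω s') * (if ω' = ω then 1 else 0) + β θ₀ ω s' * πΩ s' ω')) *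
            (∑ p', w p' * Qd s' ω' p') := by
          rw [show (∑ s' : S, ∑ ω' : O, ∑ a : A, (πo ω s a * γ * Kbar w K s a s' *
              ((1 - β θ₀ ω s') * (if ω' = ω then 1 else 0) + β θ₀ ω s' * πΩ s' ω')) *
              (∑ p', w p' * Qd s' ω' p')) =
              ∑ s' : S, ∑ a : A, ∑ ω' : O, (πo ω s a * γ * Kbar w K s a s' *
              ((1 - β θ₀ ω s') * (if ω' = ω then 1 else 0) + β θ₀ ω s' * πΩ s' ω')) *
              (∑ p', w p' * Qd s' ω' p') from
            Finset.sum_congr rfl fun s' _ => Finset.sum_comm]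
          exact Finset.sum_comm
      _ = ∑ a, ∑ s', πo ω s a * γ * Kbar w K s a s' *
            ((1 - β θ₀ ω s') * (∑ p, w p * Qd s' ω p) +
              β θ₀ ω s' * ∑ ω', πΩ s' ω' * ∑ p, w p * Qd s' ω' p) := by
          refine Finset.sum_congr rfl fun a _ => Finset.sum_congr rfl fun s' _ => ?_
          have split : ∀ ω' : O, (πo ω s a * γ * Kbar w K s a s' *
              ((1 - β θ₀ ω s') * (if ω' = ω then 1 else 0) + β θ₀ ω s' * πΩ s' ω')) *
              (∑ p, w p * Qd s' ω' p) =
              (if ω' = ω then πo ω s a * γ * Kbar w K s a s' *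
                  ((1 - β θ₀ ω s') * ∑ p, w p * Qd s' ω' p) else 0) +
                πo ω s a * γ * Kbar w K s a s' *
                  (β θ₀ ω s' * (πΩ s' ω' * ∑ p, w p * Qd s' ω' p)) := by
            intro ω'
            by_cases h : ω' = ω <;> simp [h] <;> ring
          simp only [split, Finset.sum_add_distrib, Finset.sum_ite_eq',
            Finset.mem_univ, if_true, ← Finset.mul_sum]
          ring
  rw [lhs_eq, t2]
  have t1 : (∑ a, πo ω s a * γ * ∑ s', Kbar w K s a s' *
        deriv (fun θ => β θ ω s') θ₀ *
        ((∑ p, w p * VΩ θ₀ s' p) - (∑ p, w p * QΩ θ₀ s' ω p))) =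
      ∑ a, ∑ s', πo ω s a * γ * Kbar w K s a s' *
        (βd ω s' * ((∑ p, w p * VΩ θ₀ s' p) - (∑ p, w p * QΩ θ₀ s' ω p))) := by
    refine Finset.sum_congr rfl fun a _ => ?_
    rw [Finset.mul_sum]
    exact Finset.sum_congr rfl fun s' _ => by ring
  rw [t1, ← Finset.sum_add_distrib]
  refine Finset.sum_congr rfl fun a _ => ?_
  rw [← Finset.sum_add_distrib]
  refine Finset.sum_congr rfl fun s' _ => ?_
  rw [hMM]
  ring
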